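/- Let f : ℝ^d → ℝ be differentiable with L₁-Lipschitz gradient (L₁ > 0), and let 0 < β. Suppose w ∈ ℝ^d satisfies ‖w‖ = 1 and ⟨∇f(w), w⟩ ≥ β, and set w⁺ = (1 − β/L₁)·w. Then f(w⁺) − f(w) ≤ −β²/(2L₁). -/

import Mathlib

open scoped RealInnerProductSpace

lemma descent_lemma {d : ℕ} (f : EuclideanSpace ℝ (Fin d) → ℝ)
    (g : EuclideanSpace ℝ (Fin d) → EuclideanSpace ℝ (Fin d))
    (hg : ∀ x, HasGradientAt f (g x) x)
    (L₁ : ℝ) (hL₁ : 0 < L₁)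
    (hlip : ∀ x y, ‖g x - g y‖ ≤ L₁ * ‖x - y‖)
    (x y : EuclideanSpace ℝ (Fin d)) :
    f y ≤ f x + ⟪g x, y - x⟫ + L₁ / 2 * ‖y - x‖ ^ 2 := by
  set v := y - x with hv
  set φ : ℝ → ℝ := fun t => f (x + t • v) - t * ⟪g x, v⟫ - L₁ * t ^ 2 * ‖v‖ ^ 2 / 2 with hφ
  have hder : ∀ t : ℝ, HasDerivAt φ
      (⟪g (x + t • v), v⟫ - ⟪g x, v⟫ - L₁ * t * ‖v‖ ^ 2) t := by
    intro t
    have h1 : HasDerivAt (fun t : ℝ => x + t • v) v t := by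
      simpa using ((hasDerivAt_id t).smul_const v).const_add x
    have h2 : HasDerivAt (fun t : ℝ => f (x + t • v)) ⟪g (x + t • v), v⟫ t := by
      have := (hg (x + t • v)).hasFDerivAt.comp_hasDerivAt t h1
      simp [InnerProductSpace.toDual_apply_apply, Function.comp_def] at this
      exact this
    have h3 : HasDerivAt (fun t : ℝ => t * ⟪g x, v⟫) ⟪g x, v⟫ t := by
      simpa using (hasDerivAt_id t).mul_const (⟪g x, v⟫ : ℝ)
    have h4 : HasDerivAt (fun t : ℝ => L₁ * t ^ 2 * ‖v‖ ^ 2 / 2)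
        (L₁ * t * ‖v‖ ^ 2) t := by
      have := (((hasDerivAt_pow 2 t).const_mul L₁).mul_const (‖v‖ ^ 2)).div_const 2
      exact this.congr_deriv (by simp; ring)
    exact (h2.sub h3).sub h4
  have hcont : ContinuousOn φ (Set.Icc 0 1) :=
    fun t _ => ((hder t).continuousAt).continuousWithinAt
  have hanti : AntitoneOn φ (Set.Icc 0 1) := by
    apply antitoneOn_of_deriv_nonpos (convex_Icc 0 1) hcont
    · intro t ht
      exact ((hder t).differentiableAt).differentiableWithinAt
    · intro t ht
      rw [interior_Icc] at ht
      rw [(hder t).deriv]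
      have h1 : ⟪g (x + t • v) - g x, v⟫ ≤ L₁ * t * ‖v‖ ^ 2 := by
        calc ⟪g (x + t • v) - g x, v⟫ ≤ ‖g (x + t • v) - g x‖ * ‖v‖ :=
              real_inner_le_norm _ _
          _ ≤ (L₁ * ‖(x + t • v) - x‖) * ‖v‖ := by
              gcongr; exact hlip _ _
          _ = L₁ * (|t| * ‖v‖) * ‖v‖ := by
              rw [add_sub_cancel_left, norm_smul, Real.norm_eq_abs]
          _ = L₁ * t * ‖v‖ ^ 2 := by
              rw [abs_of_pos ht.1]; ring
      rw [inner_sub_left] at h1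
      linarith
  have key := hanti (Set.left_mem_Icc.2 zero_le_one) (Set.right_mem_Icc.2 zero_le_one)
    zero_le_one
  have hy : x + (1 : ℝ) • v = y := by rw [one_smul, hv]; abel
  have k0 : φ 0 = f x := by simp only [hφ, zero_smul, add_zero, zero_mul, zero_pow,
    mul_zero, zero_div, sub_zero, ne_eq, OfNat.ofNat_ne_zero, not_false_eq_true]
  have k1 : φ 1 = f y - ⟪g x, v⟫ - L₁ * ‖v‖ ^ 2 / 2 := by
    simp only [hφ, hy, one_mul, one_pow, mul_one]
  rw [k0, k1] at key
  linarith

/-- Descent guarantee of the boundary step `w⁺ = (1 − β/L₁) w` of projected gradient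
descent on the unit ball, when the gradient has inner product at least `β` with the
outward normal at a point of the unit sphere. -/
theorem boundary_step_descent
    {d : ℕ} (f : EuclideanSpace ℝ (Fin d) → ℝ)
    (g : EuclideanSpace ℝ (Fin d) → EuclideanSpace ℝ (Fin d))
    (hg : ∀ x, HasGradientAt f (g x) x)
    (L₁ : ℝ) (hL₁ : 0 < L₁)
    (hlip : ∀ x y, ‖g x - g y‖ ≤ L₁ * ‖x - y‖)
    (β : ℝ) (hβ : 0 < β)
    (w : EuclideanSpace ℝ (Fin d)) (hw : ‖w‖ = 1) (hgw : β ≤ ⟪g w, w⟫)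
    (wplus : EuclideanSpace ℝ (Fin d)) (hwp : wplus = (1 - β / L₁) • w) :
    f wplus - f w ≤ -(β ^ 2 / (2 * L₁)) := by
  have hdiff : wplus - w = (-(β / L₁)) • w := by
    rw [hwp]; module
  have hkey := descent_lemma f g hg L₁ hL₁ hlip w wplus
  rw [hdiff] at hkey
  rw [real_inner_smul_right] at hkey
  have hnorm : ‖(-(β / L₁)) • w‖ ^ 2 = (β / L₁) ^ 2 := by
    rw [norm_smul, hw, Real.norm_eq_abs, mul_one, abs_neg,
      abs_of_pos (div_pos hβ hL₁)]
  rw [hnorm] at hkey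
  have h1 : -(β / L₁) * ⟪g w, w⟫ ≤ -(β / L₁) * β := by
    apply mul_le_mul_of_nonpos_left hgw
    simp [le_of_lt (div_pos hβ hL₁)]
  have h2 : -(β / L₁) * β + L₁ / 2 * (β / L₁) ^ 2 = -(β ^ 2 / (2 * L₁)) := by
    field_simp; ring
  linarith
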